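/- Let γ₀ = (−1+√17)/2 and let α, β ∈ [γ₀, 2). Let n₁, n₂ ≥ 1, N = n₁n₂, let r, s > 0, and let D₊, D₋, E₊, E₋ be N×N diagonal matrices with nonnegative diagonal entries. Then the matrix 𝓜 = (1/r)I_N + D₊(I_{n₂}⊗A_{n₁}^α) + D₋(I_{n₂}⊗(A_{n₁}^α)ᵀ) + (s/r)E₊(A_{n₂}^β⊗I_{n₁}) + (s/r)E₋((A_{n₂}^β)ᵀ⊗I_{n₁}) has strictly positive diagonal entries, nonpositive off-diagonal entries, and is strictly diagonally dominant by rows (for every row the diagonal entry strictly exceeds the sum of the absolute values of the off-diagonal entries); in particular 𝓜 is a nonsingular M-matrix. -/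

import Mathlib

open scoped Real Topology Kronecker
open Matrix

/-- Alternating fractional binomial coefficients. -/
noncomputable def gcoef (γ : ℝ) (k : ℕ) : ℝ :=
  (-1 : ℝ) ^ k / (Nat.factorial k) * ∏ i ∈ Finset.range k, (γ - i)

/-- WSGD weights. -/
noncomputable def w (γ : ℝ) : ℕ → ℝ
  | 0 => γ / 2 * gcoef γ 0
  | (k + 1) => γ / 2 * gcoef γ (k + 1) + (2 - γ) / 2 * gcoef γ k

/-- WSGD weights extended to ℤ by zero on negative indices. -/
noncomputable def wZ (γ : ℝ) (z : ℤ) : ℝ :=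
  if 0 ≤ z then w γ z.toNat else 0

/-- The Toeplitz matrix `A_n^γ` with `(i,j)` entry `-w_{i-j+1}^{(γ)}`. -/
noncomputable def Amat (γ : ℝ) (n : ℕ) : Matrix (Fin n) (Fin n) ℝ :=
  Matrix.of fun i j => -wZ γ (((i : ℕ) : ℤ) - ((j : ℕ) : ℤ) + 1)

lemma gcoef_zero (γ : ℝ) : gcoef γ 0 = 1 := by simp [gcoef]

lemma gcoef_succ (γ : ℝ) (k : ℕ) :
    gcoef γ (k + 1) = gcoef γ k * ((k - γ) / (k + 1)) := by
  have hk : (Nat.factorial k : ℝ) ≠ 0 := by positivity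
  have hk1 : (k : ℝ) + 1 ≠ 0 := by positivity
  simp only [gcoef, Finset.prod_range_succ, Nat.factorial_succ]
  push_cast
  field_simp
  ring

lemma gcoef_one (γ : ℝ) : gcoef γ 1 = -γ := by
  rw [gcoef_succ, gcoef_zero]; norm_num

lemma gcoef_two (γ : ℝ) : gcoef γ 2 = γ * (γ - 1) / 2 := by
  rw [gcoef_succ, gcoef_one]; push_cast; ring

lemma gcoef_nonpos (γ : ℝ) (h0 : 0 ≤ γ) (h1 : γ ≤ 1) :
    ∀ k, 1 ≤ k → gcoef γ k ≤ 0 := by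
  intro k hk
  induction k with
  | zero => omega
  | succ n ih =>
    rcases Nat.eq_zero_or_pos n with h | h
    · subst h; rw [gcoef_one]; linarith
    · have hle := ih h
      rw [gcoef_succ]
      have hn : (1:ℝ) ≤ n := by exact_mod_cast h
      have hdiv : 0 ≤ ((n:ℝ) - γ) / (n + 1) := by
        apply div_nonneg (by linarith) (by positivity)
      exact mul_nonpos_of_nonpos_of_nonneg hle hdiv

lemma gcoef_nonneg (γ : ℝ) (h1 : 1 ≤ γ) (h2 : γ ≤ 2) :
    ∀ k, 2 ≤ k → 0 ≤ gcoef γ k := by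
  intro k hk
  induction k with
  | zero => omega
  | succ n ih =>
    rcases Nat.lt_or_ge n 2 with h | h
    · have : n = 1 := by omega
      subst this
      rw [gcoef_two]
      have : 0 ≤ γ - 1 := by linarith
      positivity
    · have := ih h
      rw [gcoef_succ]
      apply mul_nonneg this
      apply div_nonneg _ (by positivity)
      have : (2:ℝ) ≤ n := by exact_mod_cast h
      linarith

lemma gcoef_shift (γ : ℝ) (m : ℕ) :
    gcoef γ (m + 1) = gcoef (γ - 1) m * (-γ / (m + 1)) := by
  have hk : (Nat.factorial m : ℝ) ≠ 0 := by positivity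
  have hk1 : (m : ℝ) + 1 ≠ 0 := by positivity
  have hprod : ∏ i ∈ Finset.range m, (γ - (i + 1 : ℕ)) =
      ∏ i ∈ Finset.range m, (γ - 1 - i) := by
    apply Finset.prod_congr rfl
    intro i _
    push_cast
    ring
  simp only [gcoef, Finset.prod_range_succ', Nat.factorial_succ, hprod]
  push_cast
  field_simp
  ring

lemma sum_gcoef (γ : ℝ) (m : ℕ) :
    ∑ k ∈ Finset.range (m + 1), gcoef γ k = gcoef (γ - 1) m := by
  induction m with
  | zero => simp [gcoef_zero]
  | succ n ih =>
    rw [Finset.sum_range_succ, ih, gcoef_shift, gcoef_succ]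
    have hk1 : (n : ℝ) + 1 ≠ 0 := by positivity
    field_simp
    ring





lemma mul_np {a b : ℝ} (ha : 0 ≤ a) (hb : b ≤ 0) : a * b ≤ 0 := by nlinarith

lemma gamma_facts (γ : ℝ) (h1 : (-1 + Real.sqrt 17) / 2 ≤ γ) (h2 : γ < 2) :
    1 < γ ∧ 4 ≤ γ ^ 2 + γ := by
  have hs : Real.sqrt 17 ^ 2 = 17 := Real.sq_sqrt (by norm_num)
  have hnn : 0 ≤ Real.sqrt 17 := Real.sqrt_nonneg 17
  have h3 : 3 < Real.sqrt 17 := by nlinarith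
  constructor
  · linarith
  · nlinarith

lemma w_one_neg (γ : ℝ) (h1 : 1 < γ) (h2 : γ < 2) (h4 : 4 ≤ γ ^ 2 + γ) :
    w γ 1 < 0 := by
  show γ / 2 * gcoef γ 1 + (2 - γ) / 2 * gcoef γ 0 < 0
  rw [gcoef_one, gcoef_zero]
  nlinarith

lemma w_nonneg (γ : ℝ) (h1 : 1 < γ) (h2 : γ < 2) (h4 : 4 ≤ γ ^ 2 + γ) :
    ∀ k, k ≠ 1 → 0 ≤ w γ k := by
  intro k hk
  match k, hk with
  | 0, _ =>
    show 0 ≤ γ / 2 * gcoef γ 0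
    rw [gcoef_zero]; linarith
  | 2, _ =>
    show 0 ≤ γ / 2 * gcoef γ 2 + (2 - γ) / 2 * gcoef γ 1
    rw [gcoef_two, gcoef_one]
    nlinarith
  | (n+3), _ =>
    show 0 ≤ γ / 2 * gcoef γ (n + 3) + (2 - γ) / 2 * gcoef γ (n + 2)
    have ha := gcoef_nonneg γ (le_of_lt h1) (le_of_lt h2) (n + 3) (by omega)
    have hb := gcoef_nonneg γ (le_of_lt h1) (le_of_lt h2) (n + 2) (by omega)
    have : 0 ≤ γ / 2 := by linarith
    have : 0 ≤ (2 - γ) / 2 := by linarith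
    positivity

lemma sum_w (γ : ℝ) (m : ℕ) :
    ∑ k ∈ Finset.range (m + 2), w γ k
      = γ / 2 * gcoef (γ - 1) (m + 1) + (2 - γ) / 2 * gcoef (γ - 1) m := by
  rw [← sum_gcoef, ← sum_gcoef]
  rw [Finset.sum_range_succ' (fun k => w γ k) (m + 1)]
  rw [Finset.sum_range_succ' (fun k => gcoef γ k) (m + 1)]
  simp only [w, Finset.sum_add_distrib, Finset.mul_sum, mul_add]
  ring

lemma sum_w_nonpos (γ : ℝ) (h1 : 1 < γ) (h2 : γ < 2) (h4 : 4 ≤ γ ^ 2 + γ) :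
    ∀ m, 1 ≤ m → ∑ k ∈ Finset.range (m + 1), w γ k ≤ 0 := by
  intro m hm
  obtain ⟨t, rfl⟩ : ∃ t, m = t + 1 := ⟨m - 1, by omega⟩
  rw [show t + 1 + 1 = t + 2 from rfl, sum_w]
  rcases Nat.eq_zero_or_pos t with rfl | ht
  · rw [gcoef_one, gcoef_zero]; nlinarith
  · have hg1 : gcoef (γ - 1) (t + 1) ≤ 0 :=
      gcoef_nonpos _ (by linarith) (by linarith) _ (by omega)
    have hg2 : gcoef (γ - 1) t ≤ 0 :=
      gcoef_nonpos _ (by linarith) (by linarith) _ ht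
    nlinarith

lemma wZ_nonneg (γ : ℝ) (h1 : 1 < γ) (h2 : γ < 2) (h4 : 4 ≤ γ ^ 2 + γ)
    (z : ℤ) (hz : z ≠ 1) : 0 ≤ wZ γ z := by
  unfold wZ
  split
  · apply w_nonneg γ h1 h2 h4
    intro h
    apply hz
    omega
  · exact le_refl 0

lemma w_zero_nonneg (γ : ℝ) (h1 : 1 < γ) : 0 ≤ w γ 0 := by
  show 0 ≤ γ / 2 * gcoef γ 0
  rw [gcoef_zero]; linarith

lemma key_sum (γ : ℝ) (h1 : 1 < γ) (h2 : γ < 2) (h4 : 4 ≤ γ ^ 2 + γ)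
    (n c : ℕ) (hc1 : 1 ≤ c) (hc2 : c ≤ n) :
    ∑ j ∈ Finset.range n, wZ γ ((c : ℤ) - j) ≤ 0 := by
  have hstep : ∑ j ∈ Finset.range n, wZ γ ((c : ℤ) - j)
      ≤ ∑ j ∈ Finset.range (c + 1), wZ γ ((c : ℤ) - j) := by
    rcases Nat.lt_or_ge n (c + 1) with h | h
    · have hnc : n = c := by omega
      subst hnc
      rw [Finset.sum_range_succ]
      have h0 : 0 ≤ wZ γ ((n : ℤ) - n) := by
        simp only [wZ, sub_self]
        simpa using w_zero_nonneg γ h1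
      linarith
    · rw [← Finset.sum_range_add_sum_Ico _ h]
      have hz : ∑ j ∈ Finset.Ico (c + 1) n, wZ γ ((c : ℤ) - j) = 0 := by
        apply Finset.sum_eq_zero
        intro j hj
        rw [Finset.mem_Ico] at hj
        have : ¬ (0 ≤ (c : ℤ) - j) := by omega
        rw [wZ, if_neg this]
      linarith
  have heq : ∑ j ∈ Finset.range (c + 1), wZ γ ((c : ℤ) - j)
      = ∑ k ∈ Finset.range (c + 1), w γ k := by
    rw [← Finset.sum_range_reflect (fun k => w γ k) (c + 1)]
    apply Finset.sum_congr rfl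
    intro j hj
    rw [Finset.mem_range] at hj
    have hj' : j ≤ c := by omega
    have hcast : (c : ℤ) - j = ((c + 1 - 1 - j : ℕ) : ℤ) := by omega
    rw [hcast]
    simp [wZ]
  rw [heq] at hstep
  exact le_trans hstep (sum_w_nonpos γ h1 h2 h4 c hc1)

lemma Amat_diag (γ : ℝ) {n : ℕ} (i : Fin n) : Amat γ n i i = -(w γ 1) := by
  simp [Amat, wZ]

lemma Amat_offdiag (γ : ℝ) (h1 : 1 < γ) (h2 : γ < 2) (h4 : 4 ≤ γ ^ 2 + γ)
    {n : ℕ} (i j : Fin n) (hij : i ≠ j) : Amat γ n i j ≤ 0 := by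
  simp only [Amat, Matrix.of_apply, neg_nonpos]
  apply wZ_nonneg γ h1 h2 h4
  have : (i : ℕ) ≠ (j : ℕ) := fun h => hij (Fin.ext h)
  omega

lemma Amat_row_sum (γ : ℝ) (h1 : 1 < γ) (h2 : γ < 2) (h4 : 4 ≤ γ ^ 2 + γ)
    {n : ℕ} (i : Fin n) : 0 ≤ ∑ j : Fin n, Amat γ n i j := by
  have key := key_sum γ h1 h2 h4 n ((i : ℕ) + 1) (by omega) (by omega)
  have heq : ∑ j : Fin n, Amat γ n i j
      = -∑ j ∈ Finset.range n, wZ γ ((((i : ℕ) + 1 : ℕ) : ℤ) - j) := by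
    rw [← Finset.sum_neg_distrib]
    rw [← Fin.sum_univ_eq_sum_range (fun j => -wZ γ ((((i : ℕ) + 1 : ℕ) : ℤ) - j)) n]
    apply Finset.sum_congr rfl
    intro j _
    simp only [Amat, Matrix.of_apply]
    congr 1
    push_cast
    ring
  rw [heq]
  linarith

lemma Amat_col_sum (γ : ℝ) (h1 : 1 < γ) (h2 : γ < 2) (h4 : 4 ≤ γ ^ 2 + γ)
    {n : ℕ} (i : Fin n) : 0 ≤ ∑ j : Fin n, Amat γ n j i := by
  have hin : (i : ℕ) < n := i.isLt
  have key := key_sum γ h1 h2 h4 n (n - (i : ℕ)) (by omega) (by omega)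
  have heq : ∑ j : Fin n, Amat γ n j i
      = -∑ j ∈ Finset.range n, wZ γ (((j : ℕ) : ℤ) - (i : ℕ) + 1) := by
    rw [← Finset.sum_neg_distrib]
    rw [← Fin.sum_univ_eq_sum_range (fun j => -wZ γ ((j : ℤ) - (i : ℕ) + 1)) n]
    apply Finset.sum_congr rfl
    intro j _
    simp only [Amat, Matrix.of_apply]
  have hrefl : ∑ j ∈ Finset.range n, wZ γ (((j : ℕ) : ℤ) - (i : ℕ) + 1)
      = ∑ j ∈ Finset.range n, wZ γ (((n - (i : ℕ) : ℕ) : ℤ) - j) := by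
    rw [← Finset.sum_range_reflect (fun j => wZ γ (((j : ℕ) : ℤ) - (i : ℕ) + 1)) n]
    apply Finset.sum_congr rfl
    intro j hj
    rw [Finset.mem_range] at hj
    congr 1
    omega
  rw [heq, hrefl]
  linarith

lemma sum_one_entry {m : Type*} [Fintype m] [DecidableEq m] (a : m) (c : ℝ) :
    ∑ j : m, (if a = j then c else 0) = c := by
  simp [Finset.sum_ite_eq]

lemma sum_kron_left {m n : Type*} [Fintype m] [Fintype n] [DecidableEq m]
    (a : m) (f : n → ℝ) :
    ∑ q : m × n, (if a = q.1 then (1 : ℝ) else 0) * f q.2 = ∑ j : n, f j := by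
  rw [Fintype.sum_prod_type]
  simp only [← Finset.mul_sum]
  simp [ite_mul, Finset.sum_ite_eq]

lemma sum_kron_right {m n : Type*} [Fintype m] [Fintype n] [DecidableEq n]
    (a : n) (f : m → ℝ) :
    ∑ q : m × n, f q.1 * (if a = q.2 then (1 : ℝ) else 0) = ∑ j : m, f j := by
  rw [Fintype.sum_prod_type]
  simp [mul_ite, Finset.sum_ite_eq]

/-- For `α, β ∈ [γ₀, 2)` with `γ₀ = (−1+√17)/2` and nonnegative diagonal diffusion
matrices, the CN-WSGD coefficient matrix `𝓜` has positive diagonal, nonpositive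
off-diagonal entries and is strictly diagonally dominant by rows; in particular it is a
nonsingular M-matrix. -/
theorem coefficient_matrix_is_M_matrix (α β : ℝ)
    (hα1 : (-1 + Real.sqrt 17) / 2 ≤ α) (hα2 : α < 2)
    (hβ1 : (-1 + Real.sqrt 17) / 2 ≤ β) (hβ2 : β < 2)
    (n₁ n₂ : ℕ) (hn₁ : 1 ≤ n₁) (hn₂ : 1 ≤ n₂) (r s : ℝ) (hr : 0 < r) (hs : 0 < s)
    (dp dm ep em : Fin n₂ × Fin n₁ → ℝ)
    (hdp : ∀ i, 0 ≤ dp i) (hdm : ∀ i, 0 ≤ dm i)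
    (hep : ∀ i, 0 ≤ ep i) (hem : ∀ i, 0 ≤ em i) :
    let M := (1 / r) • (1 : Matrix (Fin n₂ × Fin n₁) (Fin n₂ × Fin n₁) ℝ)
      + Matrix.diagonal dp * ((1 : Matrix (Fin n₂) (Fin n₂) ℝ) ⊗ₖ Amat α n₁)
      + Matrix.diagonal dm * ((1 : Matrix (Fin n₂) (Fin n₂) ℝ) ⊗ₖ (Amat α n₁)ᵀ)
      + (s / r) • (Matrix.diagonal ep * (Amat β n₂ ⊗ₖ (1 : Matrix (Fin n₁) (Fin n₁) ℝ)))
      + (s / r) • (Matrix.diagonal em * ((Amat β n₂)ᵀ ⊗ₖ (1 : Matrix (Fin n₁) (Fin n₁) ℝ)))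
    (∀ i, 0 < M i i) ∧
    (∀ i j, i ≠ j → M i j ≤ 0) ∧
    (∀ i, ∑ j ∈ Finset.univ.erase i, |M i j| < M i i) ∧
    IsUnit M := by
  intro M
  obtain ⟨hα0, hα4⟩ := gamma_facts α hα1 hα2
  obtain ⟨hβ0, hβ4⟩ := gamma_facts β hβ1 hβ2
  have hw1α : 0 < -(w α 1) := by linarith [w_one_neg α hα0 hα2 hα4]
  have hw1β : 0 < -(w β 1) := by linarith [w_one_neg β hβ0 hβ2 hβ4]
  have hrinv : 0 < 1 / r := by positivity
  have hsr : 0 ≤ s / r := by positivity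
  have hM : ∀ p q : Fin n₂ × Fin n₁, M p q =
      (if p = q then 1 / r else 0)
      + dp p * ((if p.1 = q.1 then (1 : ℝ) else 0) * Amat α n₁ p.2 q.2)
      + dm p * ((if p.1 = q.1 then (1 : ℝ) else 0) * Amat α n₁ q.2 p.2)
      + s / r * (ep p * (Amat β n₂ p.1 q.1 * (if p.2 = q.2 then (1 : ℝ) else 0)))
      + s / r * (em p * (Amat β n₂ q.1 p.1 * (if p.2 = q.2 then (1 : ℝ) else 0))) := by
    intro p q
    simp only [M, Matrix.add_apply, Matrix.smul_apply, Matrix.diagonal_mul,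
      Matrix.kroneckerMap_apply, Matrix.one_apply, Matrix.transpose_apply, smul_eq_mul,
      mul_ite, mul_one, mul_zero]
  have hdiag : ∀ p, 0 < M p p := by
    intro p
    rw [hM]
    simp only [eq_self_iff_true, if_true, Amat_diag, mul_one, one_mul]
    nlinarith [mul_nonneg (hdp p) hw1α.le, mul_nonneg (hdm p) hw1α.le,
      mul_nonneg (hep p) hw1β.le, mul_nonneg (hem p) hw1β.le,
      mul_nonneg hsr (mul_nonneg (hep p) hw1β.le),
      mul_nonneg hsr (mul_nonneg (hem p) hw1β.le)]
  have hoff : ∀ p q, p ≠ q → M p q ≤ 0 := by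
    intro p q hpq
    rw [hM, if_neg hpq]
    by_cases h1 : p.1 = q.1
    · have h2 : p.2 ≠ q.2 := fun h => hpq (Prod.ext h1 h)
      rw [if_pos h1, if_neg h2]
      simp only [one_mul, mul_zero, mul_one, zero_add, add_zero]
      have hA := Amat_offdiag α hα0 hα2 hα4 p.2 q.2 h2
      have hA' := Amat_offdiag α hα0 hα2 hα4 q.2 p.2 (Ne.symm h2)
      have t1 := mul_np (hdp p) hA
      have t2 := mul_np (hdm p) hA'
      linarith
    · rw [if_neg h1]
      by_cases h2 : p.2 = q.2
      · rw [if_pos h2]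
        simp only [zero_mul, mul_zero, mul_one, zero_add, add_zero]
        have hB := Amat_offdiag β hβ0 hβ2 hβ4 p.1 q.1 h1
        have hB' := Amat_offdiag β hβ0 hβ2 hβ4 q.1 p.1 (Ne.symm h1)
        have t1 := mul_np hsr (mul_np (hep p) hB)
        have t2 := mul_np hsr (mul_np (hem p) hB')
        linarith
      · rw [if_neg h2]
        simp
  have hrow : ∀ p, 0 < ∑ q, M p q := by
    intro p
    have hsum : ∑ q, M p q = 1 / r
        + dp p * (∑ j : Fin n₁, Amat α n₁ p.2 j)
        + dm p * (∑ j : Fin n₁, Amat α n₁ j p.2)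
        + s / r * (ep p * ∑ j : Fin n₂, Amat β n₂ p.1 j)
        + s / r * (em p * ∑ j : Fin n₂, Amat β n₂ j p.1) := by
      rw [Finset.sum_congr rfl fun q _ => hM p q]
      simp only [Finset.sum_add_distrib, ← Finset.mul_sum]
      rw [sum_one_entry p (1 / r), sum_kron_left p.1 (fun j => Amat α n₁ p.2 j),
        sum_kron_left p.1 (fun j => Amat α n₁ j p.2),
        sum_kron_right p.2 (fun j => Amat β n₂ p.1 j),
        sum_kron_right p.2 (fun j => Amat β n₂ j p.1)]
    rw [hsum]
    nlinarith [mul_nonneg (hdp p) (Amat_row_sum α hα0 hα2 hα4 p.2),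
      mul_nonneg (hdm p) (Amat_col_sum α hα0 hα2 hα4 p.2),
      mul_nonneg hsr (mul_nonneg (hep p) (Amat_row_sum β hβ0 hβ2 hβ4 p.1)),
      mul_nonneg hsr (mul_nonneg (hem p) (Amat_col_sum β hβ0 hβ2 hβ4 p.1))]
  have hdom : ∀ p, ∑ q ∈ Finset.univ.erase p, |M p q| < M p p := by
    intro p
    have habs : ∀ q ∈ Finset.univ.erase p, |M p q| = -(M p q) := by
      intro q hq
      exact abs_of_nonpos (hoff p q (Ne.symm (Finset.ne_of_mem_erase hq)))
    rw [Finset.sum_congr rfl habs, Finset.sum_neg_distrib]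
    have hsplit : ∑ q ∈ Finset.univ.erase p, M p q + M p p = ∑ q, M p q :=
      Finset.sum_erase_add _ _ (Finset.mem_univ p)
    have := hrow p
    linarith
  refine ⟨hdiag, hoff, hdom, ?_⟩
  have hdet : M.det ≠ 0 := by
    apply det_ne_zero_of_sum_row_lt_diag
    intro k
    have h := hdom k
    have : ∀ q ∈ Finset.univ.erase k, ‖M k q‖ = |M k q| := fun q _ => Real.norm_eq_abs _
    rw [Finset.sum_congr rfl this, Real.norm_eq_abs, abs_of_pos (hdiag k)]
    exact h
  exact (Matrix.isUnit_iff_isUnit_det M).mpr (isUnit_iff_ne_zero.mpr hdet)
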